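/- Let s be an (α,k)-equilibrium and s* a social optimum of a polymatrix coordination game with individual preferences on n ≥ 2 players, with 2 ≤ k ≤ n. Then SW(s*) ≤ 2α·(n−1)/(k−1)·SW(s); i.e., the (α,k)-price of anarchy is at most 2α(n−1)/(k−1). -/

import Mathlib

open Finset

lemma PoA_count_contain {N : Type*} [DecidableEq N] (s t : Finset N) (hts : t ⊆ s)
    (k : ℕ) (htk : t.card ≤ k) :
    ((s.powersetCard k).filter (fun K => t ⊆ K)).card
      = (s.card - t.card).choose (k - t.card) := by
  have : ((s.powersetCard k).filter (fun K => t ⊆ K)).card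
      = ((s \ t).powersetCard (k - t.card)).card := by
    apply Finset.card_bij' (fun K _ => K \ t) (fun L _ => L ∪ t)
    · intro K hK
      simp only [mem_filter, mem_powersetCard] at hK
      obtain ⟨⟨hKs, hKc⟩, htK⟩ := hK
      simp only [mem_powersetCard]
      exact ⟨sdiff_subset_sdiff hKs (by rfl), by rw [card_sdiff_of_subset htK, hKc]⟩
    · intro L hL
      simp only [mem_powersetCard] at hL
      obtain ⟨hLs, hLc⟩ := hL
      have hdisj : Disjoint L t := disjoint_of_subset_left hLs sdiff_disjoint
      simp only [mem_filter, mem_powersetCard]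
      refine ⟨⟨union_subset (hLs.trans sdiff_subset) hts, ?_⟩, subset_union_right⟩
      rw [card_union_of_disjoint hdisj, hLc]
      omega
    · intro K hK
      simp only [mem_filter, mem_powersetCard] at hK
      exact sdiff_union_of_subset hK.2
    · intro L hL
      simp only [mem_powersetCard] at hL
      have hdisj : Disjoint L t := disjoint_of_subset_left hL.1 sdiff_disjoint
      rw [union_sdiff_right, sdiff_eq_self_of_disjoint hdisj]
  rw [this, card_powersetCard, card_sdiff_of_subset hts]

lemma PoA_sum_single {N : Type*} [DecidableEq N] (s : Finset N) (k : ℕ) (hk : 1 ≤ k)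
    (f : N → ℝ) :
    ∑ K ∈ s.powersetCard k, ∑ i ∈ K, f i
      = ((s.card - 1).choose (k - 1) : ℝ) * ∑ i ∈ s, f i := by
  have h1 : ∀ K ∈ s.powersetCard k, ∑ i ∈ K, f i = ∑ i ∈ s, if i ∈ K then f i else 0 := by
    intro K hK
    rw [Finset.sum_ite_mem, inter_eq_right.mpr (mem_powersetCard.mp hK).1]
  rw [Finset.sum_congr rfl h1, Finset.sum_comm, Finset.mul_sum]
  refine Finset.sum_congr rfl fun i hi => ?_
  rw [← Finset.sum_filter, Finset.sum_const, nsmul_eq_mul]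
  congr 1
  have : (s.powersetCard k).filter (fun K => i ∈ K)
      = (s.powersetCard k).filter (fun K => {i} ⊆ K) := by
    simp [singleton_subset_iff]
  rw [this, PoA_count_contain s {i} (singleton_subset_iff.mpr hi) k
    (by simpa using hk), card_singleton]

lemma PoA_sum_pair {N : Type*} [DecidableEq N] (s : Finset N) (k : ℕ) (hk : 2 ≤ k)
    (g : N → N → ℝ) (hdiag : ∀ i, g i i = 0) :
    ∑ K ∈ s.powersetCard k, ∑ i ∈ K, ∑ j ∈ K, g i j
      = ((s.card - 2).choose (k - 2) : ℝ) * ∑ i ∈ s, ∑ j ∈ s, g i j := by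
  have h1 : ∀ K ∈ s.powersetCard k, ∑ i ∈ K, ∑ j ∈ K, g i j
      = ∑ i ∈ s, ∑ j ∈ s, if i ∈ K ∧ j ∈ K then g i j else 0 := by
    intro K hK
    have hKs := (mem_powersetCard.mp hK).1
    symm
    calc ∑ i ∈ s, ∑ j ∈ s, (if i ∈ K ∧ j ∈ K then g i j else 0)
        = ∑ i ∈ s, (if i ∈ K then ∑ j ∈ s, (if j ∈ K then g i j else 0) else 0) := by
          refine Finset.sum_congr rfl fun i _ => ?_
          by_cases hi : i ∈ K <;> simp [hi]
      _ = ∑ i ∈ s ∩ K, ∑ j ∈ s, (if j ∈ K then g i j else 0) := Finset.sum_ite_mem ..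
      _ = ∑ i ∈ K, ∑ j ∈ K, g i j := by
          rw [inter_eq_right.mpr hKs]
          exact Finset.sum_congr rfl fun i _ => by
            rw [Finset.sum_ite_mem, inter_eq_right.mpr hKs]
  rw [Finset.sum_congr rfl h1, Finset.sum_comm, Finset.mul_sum]
  refine Finset.sum_congr rfl fun i hi => ?_
  rw [Finset.sum_comm, Finset.mul_sum]
  refine Finset.sum_congr rfl fun j hj => ?_
  by_cases hij : i = j
  · subst hij
    simp [hdiag]
  · rw [← Finset.sum_filter, Finset.sum_const, nsmul_eq_mul]
    congr 1
    have : (s.powersetCard k).filter (fun K => i ∈ K ∧ j ∈ K)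
        = (s.powersetCard k).filter (fun K => ({i, j} : Finset N) ⊆ K) := by
      simp [insert_subset_iff, singleton_subset_iff]
    rw [this, PoA_count_contain s {i, j} (by
        simp [insert_subset_iff, singleton_subset_iff, hi, hj]) k
      (by rw [card_pair hij]; exact hk), card_pair hij]

/-- If `s` is an `(α,k)`-equilibrium and `s*` a social optimum of a polymatrix
coordination game with individual preferences on `n ≥ 2` players, with `2 ≤ k ≤ n`, then
`SW(s*) ≤ 2α(n-1)/(k-1) · SW(s)`. -/
theorem alpha_k_price_of_anarchy_upper_bound
    {N : Type*} [Fintype N] [DecidableEq N]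
    (S : N → Type*) [∀ i, Fintype (S i)]
    (E : N → N → Prop) [∀ i j, Decidable (E i j)]
    (hE_symm : ∀ i j, E i j ↔ E j i) (hE_irrefl : ∀ i, ¬ E i i)
    (q : ∀ i, S i → ℝ) (hq : ∀ i x, 0 ≤ q i x)
    (Q : ∀ i j, S i → S j → ℝ)
    (hQ_nonneg : ∀ i j x y, 0 ≤ Q i j x y)
    (hQ_symm : ∀ i j x y, Q i j x y = Q j i y x)
    (p : (∀ i, S i) → N → ℝ)
    (hp : ∀ s i, p s i = q i (s i) + ∑ j ∈ univ.filter (fun j => E i j), Q i j (s i) (s j))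
    (SW : (∀ i, S i) → ℝ) (hSW : ∀ s, SW s = ∑ i, p s i)
    (n : ℕ) (hn : n = Fintype.card N) (hn2 : 2 ≤ n)
    (k : ℕ) (hk2 : 2 ≤ k) (hkn : k ≤ n)
    (α : ℝ) (hα : 1 ≤ α)
    (s : ∀ i, S i)
    -- `s` is an `(α,k)`-equilibrium:
    (heq : ∀ K : Finset N, K.Nonempty → K.card ≤ k → ∀ s' : ∀ i, S i,
      (∀ i ∉ K, s' i = s i) → ∃ i ∈ K, p s' i ≤ α * p s i)
    (sStar : ∀ i, S i)
    -- `s*` is a social optimum: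
    (hopt : ∀ s'' : ∀ i, S i, SW s'' ≤ SW sStar) :
    SW sStar ≤ 2 * α * (n - 1) / (k - 1) * SW s := by
  classical
  -- the edge-payoff function of `s*`, as a total function vanishing on non-edges
  set G : N → N → ℝ := fun a b => if E a b then Q a b (sStar a) (sStar b) else 0 with hG
  have hGnonneg : ∀ a b, 0 ≤ G a b := by
    intro a b; simp only [hG]; split
    · exact hQ_nonneg _ _ _ _
    · exact le_refl 0
  have hGdiag : ∀ a, G a a = 0 := by
    intro a; simp [hG, hE_irrefl a]
  have hGsymm : ∀ a b, G a b = G b a := by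
    intro a b
    simp only [hG]
    by_cases h : E a b
    · rw [if_pos h, if_pos ((hE_symm a b).mp h), hQ_symm]
    · rw [if_neg h, if_neg (fun h' => h ((hE_symm b a).mp h'))]
  -- payoff in terms of G
  have hpG : ∀ (t : ∀ i, S i) i, (∀ j, t j = sStar j) →
      p t i = q i (sStar i) + ∑ j, G i j := by
    intro t i ht
    rw [hp, Finset.sum_filter]
    simp only [ht, hG]
  -- Chain lemma: iterated coalition deviations inside any K with |K| ≤ k
  have chain : ∀ K : Finset N, K.card ≤ k →
      (∑ i ∈ K, q i (sStar i)) + (∑ i ∈ K, ∑ j ∈ K, G i j) / 2 ≤ α * ∑ i ∈ K, p s i := by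
    intro K
    induction K using Finset.strongInduction with
    | _ K ih =>
      intro hKk
      rcases K.eq_empty_or_nonempty with rfl | hne
      · simp
      · set s' : ∀ i, S i := fun j => if j ∈ K then sStar j else s j with hs'
        obtain ⟨i, hiK, hwit⟩ := heq K hne hKk s' (fun j hj => if_neg hj)
        -- the witness inequality
        have hkey : q i (sStar i) + ∑ j ∈ K, G i j ≤ α * p s i := by
          refine le_trans ?_ hwit
          rw [hp, Finset.sum_filter]
          have hsi : s' i = sStar i := if_pos hiK
          rw [hsi]
          have hsub : ∑ j ∈ K, G i j
              ≤ ∑ j ∈ (univ : Finset N), (if E i j then Q i j (sStar i) (s' j) else 0) := by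
            have hKeq : ∀ j ∈ K, G i j = if E i j then Q i j (sStar i) (s' j) else 0 := by
              intro j hj
              have : s' j = sStar j := if_pos hj
              simp only [hG, this]
            rw [Finset.sum_congr rfl hKeq]
            refine Finset.sum_le_sum_of_subset_of_nonneg (subset_univ K) ?_
            intro j _ _
            split
            · exact hQ_nonneg _ _ _ _
            · exact le_refl 0
          linarith
        set K' := K.erase i with hK'
        have ihK' := ih K' (erase_ssubset hiK)
          (le_trans (card_le_card (erase_subset i K)) hKk)
        have e1 : ∑ a ∈ K, q a (sStar a) = q i (sStar i) + ∑ a ∈ K', q a (sStar a) :=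
          (Finset.add_sum_erase K _ hiK).symm
        have e4 : ∑ a ∈ K, p s a = p s i + ∑ a ∈ K', p s a :=
          (Finset.add_sum_erase K _ hiK).symm
        have e3 : ∑ b ∈ K, G i b = ∑ b ∈ K', G i b := by
          rw [← Finset.add_sum_erase K (G i) hiK, hGdiag, zero_add]
        have e2 : ∑ a ∈ K, ∑ b ∈ K, G a b
            = (∑ b ∈ K, G i b) + ((∑ a ∈ K', G i a) + ∑ a ∈ K', ∑ b ∈ K', G a b) := by
          rw [← Finset.add_sum_erase K (fun a => ∑ b ∈ K, G a b) hiK]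
          congr 1
          have : ∀ a ∈ K', ∑ b ∈ K, G a b = G a i + ∑ b ∈ K', G a b := by
            intro a _
            exact (Finset.add_sum_erase K (G a) hiK).symm
          rw [Finset.sum_congr rfl this, Finset.sum_add_distrib]
          congr 1
          exact Finset.sum_congr rfl fun a _ => hGsymm a i
        rw [e1, e4, e2, e3]
        linarith
  -- Sum the chain inequality over all subsets of size k
  have hsum : ∑ K ∈ (univ : Finset N).powersetCard k,
        ((∑ i ∈ K, q i (sStar i)) + (∑ i ∈ K, ∑ j ∈ K, G i j) / 2)
      ≤ ∑ K ∈ (univ : Finset N).powersetCard k, α * ∑ i ∈ K, p s i := by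
    refine Finset.sum_le_sum fun K hK => ?_
    exact chain K (le_of_eq (mem_powersetCard.mp hK).2)
  have hcard : (univ : Finset N).card = n := by rw [card_univ, hn]
  set A : ℝ := ∑ i, q i (sStar i) with hA
  set B : ℝ := ∑ i, ∑ j, G i j with hB
  have hAnonneg : 0 ≤ A := Finset.sum_nonneg fun i _ => hq i _
  have hBnonneg : 0 ≤ B := Finset.sum_nonneg fun i _ =>
    Finset.sum_nonneg fun j _ => hGnonneg i j
  -- evaluate the two sides of hsum
  have hL1 : ∑ K ∈ (univ : Finset N).powersetCard k, ∑ i ∈ K, q i (sStar i)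
      = ((n - 1).choose (k - 1) : ℝ) * A := by
    rw [PoA_sum_single (univ : Finset N) k (by omega) _, hcard]
  have hL2 : ∑ K ∈ (univ : Finset N).powersetCard k, ∑ i ∈ K, ∑ j ∈ K, G i j
      = ((n - 2).choose (k - 2) : ℝ) * B := by
    rw [PoA_sum_pair (univ : Finset N) k hk2 G hGdiag, hcard]
  have hR : ∑ K ∈ (univ : Finset N).powersetCard k, ∑ i ∈ K, p s i
      = ((n - 1).choose (k - 1) : ℝ) * SW s := by
    rw [PoA_sum_single (univ : Finset N) k (by omega) _, hcard, hSW]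
  set C1 : ℝ := ((n - 1).choose (k - 1) : ℝ) with hC1
  set C2 : ℝ := ((n - 2).choose (k - 2) : ℝ) with hC2
  have h5 : C1 * A + C2 * B / 2 ≤ α * (C1 * SW s) := by
    have := hsum
    rw [Finset.sum_add_distrib, ← Finset.sum_div, hL1, hL2, ← Finset.mul_sum, hR] at this
    linarith
  -- the binomial ratio
  have hratioN : (n - 1) * (n - 2).choose (k - 2) = (n - 1).choose (k - 1) * (k - 1) := by
    have h := Nat.add_one_mul_choose_eq (n - 2) (k - 2)
    have e1 : n - 2 + 1 = n - 1 := by omega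
    have e2 : k - 2 + 1 = k - 1 := by omega
    rw [e1, e2] at h
    exact h
  have hkk : (1 : ℝ) ≤ (k : ℝ) - 1 := by
    have : (2 : ℝ) ≤ (k : ℝ) := by exact_mod_cast hk2
    linarith
  have hnnkk : (k : ℝ) - 1 ≤ (n : ℝ) - 1 := by
    have : (k : ℝ) ≤ (n : ℝ) := by exact_mod_cast hkn
    linarith
  have hratio : ((n : ℝ) - 1) * C2 = C1 * ((k : ℝ) - 1) := by
    have := hratioN
    have h1 : ((n - 1 : ℕ) : ℝ) = (n : ℝ) - 1 := by
      have : 1 ≤ n := by omega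
      push_cast [Nat.cast_sub this]
      ring
    have h2 : ((k - 1 : ℕ) : ℝ) = (k : ℝ) - 1 := by
      have : 1 ≤ k := by omega
      push_cast [Nat.cast_sub this]
      ring
    calc ((n : ℝ) - 1) * C2 = ((n - 1 : ℕ) : ℝ) * ((n - 2).choose (k - 2) : ℝ) := by
          rw [h1, hC2]
      _ = (((n - 1) * (n - 2).choose (k - 2) : ℕ) : ℝ) := by push_cast; ring
      _ = (((n - 1).choose (k - 1) * (k - 1) : ℕ) : ℝ) := by rw [hratioN]
      _ = C1 * ((k : ℝ) - 1) := by push_cast [hC1, h2]; ring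
  have hC2pos : (0 : ℝ) < C2 := by
    rw [hC2]
    exact_mod_cast Nat.choose_pos (by omega : k - 2 ≤ n - 2)
  have hC1C2 : C2 ≤ C1 := by
    have h1 : C1 * ((k : ℝ) - 1) = ((n : ℝ) - 1) * C2 := hratio.symm
    nlinarith
  -- SW(s*) = A + B
  have hSWstar : SW sStar = A + B := by
    rw [hSW, hA, hB, ← Finset.sum_add_distrib]
    refine Finset.sum_congr rfl fun i _ => ?_
    exact hpG sStar i (fun j => rfl)
  rw [hSWstar]
  -- final algebra
  have step1 : (A + B) * C2 ≤ 2 * α * (C1 * SW s) := by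
    have hAC : A * C2 ≤ 2 * (C1 * A) := by nlinarith
    nlinarith
  have h6 : ((A + B) * ((k : ℝ) - 1)) * C2 ≤ (2 * α * SW s * ((n : ℝ) - 1)) * C2 := by
    have h := mul_le_mul_of_nonneg_right step1 (by linarith : (0:ℝ) ≤ (k : ℝ) - 1)
    calc ((A + B) * ((k : ℝ) - 1)) * C2 = ((A + B) * C2) * ((k : ℝ) - 1) := by ring
      _ ≤ (2 * α * (C1 * SW s)) * ((k : ℝ) - 1) := h
      _ = (2 * α * SW s) * (C1 * ((k : ℝ) - 1)) := by ring
      _ = (2 * α * SW s) * (((n : ℝ) - 1) * C2) := by rw [← hratio]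
      _ = (2 * α * SW s * ((n : ℝ) - 1)) * C2 := by ring
  have h7 : (A + B) * ((k : ℝ) - 1) ≤ 2 * α * SW s * ((n : ℝ) - 1) :=
    le_of_mul_le_mul_right h6 hC2pos
  rw [div_mul_eq_mul_div, le_div_iff₀ (by linarith : (0:ℝ) < (k : ℝ) - 1)]
  linarith
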